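/- Key claim of the iteration lemma: Let H ⊆ N be a nonempty set of non-fixed players and r : N → ℝ prescribed payments for the fixed players in N \ H. Suppose f and f' are both maximum among all s-t flows g in the profit sharing graph that satisfy g(b, t) = r b for all b ∈ N \ H and that take a common value on all edges (b, t) with b ∈ H (i.e., g(b, t) = g(b', t) for all b, b' ∈ H). Then f(b, t) = f'(b, t) for every b ∈ N; in particular, every edge (b, t) with b ∈ H is fixed, so each iteration of the equal-maximum-flow algorithm fixes at least one edge. -/

import Mathlib

open Finset

/-- Vertices of the profit sharing graph: source, sink, a node per trade, a node per player. -/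
inductive PSV (E N : Type) where
  | src | snk | trade (e : E) | player (b : N)
  deriving DecidableEq, Fintype

/-- `f` is an `s`-`t` flow for capacities `u`: nonnegative, capacity-respecting,
and flow is conserved at every vertex other than `s` and `t`. -/
def IsFlow {V : Type} [Fintype V] (s t : V) (u : V → V → ℝ) (f : V → V → ℝ) : Prop :=
  (∀ v w, 0 ≤ f v w) ∧ (∀ v w, f v w ≤ u v w) ∧
    ∀ v, v ≠ s → v ≠ t → (∑ w, f w v) = ∑ w, f v w

/-- The value of a flow: net outflow of the source `s`. -/
def flowValue {V : Type} [Fintype V] (s : V) (f : V → V → ℝ) : ℝ :=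
  (∑ w, f s w) - ∑ w, f w s

/-- A maximum flow: a flow whose value is greatest among all `s`-`t` flows. -/
def IsMaxFlow {V : Type} [Fintype V] (s t : V) (u : V → V → ℝ) (f : V → V → ℝ) : Prop :=
  IsFlow s t u f ∧ ∀ g, IsFlow s t u g → flowValue s g ≤ flowValue s f

/-- Capacities of the profit sharing graph for trades `E` with profits `w`,
players `N` and incidence map `B`. -/
noncomputable def psCap {E N : Type} [Fintype E] [DecidableEq N]
    (w : E → ℝ) (B : E → Finset N) : PSV E N → PSV E N → ℝ
  | .src, .trade e => w e
  | .trade e, .player b => if b ∈ B e then w e else 0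
  | .player b, .snk => ∑ e ∈ Finset.univ.filter (fun e => b ∈ B e), w e
  | _, _ => 0

/-- Characteristic function of the associated cooperative game:
`v S` is the total profit of trades all of whose players lie in `S`. -/
noncomputable def charFun {E N : Type} [Fintype E] [DecidableEq N]
    (w : E → ℝ) (B : E → Finset N) (S : Finset N) : ℝ :=
  ∑ e ∈ Finset.univ.filter (fun e => B e ⊆ S), w e

/-- The class of flows in the iteration: flows `g` of the profit sharing graph which pay the
prescribed amount `r b` to every fixed player `b ∉ H` and pay all non-fixed players in `H`
a common value. -/
def InIterClass {E N : Type} [Fintype E] [Fintype N] [DecidableEq E] [DecidableEq N]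
    (w : E → ℝ) (B : E → Finset N) (H : Finset N) (r : N → ℝ)
    (g : PSV E N → PSV E N → ℝ) : Prop :=
  IsFlow PSV.src PSV.snk (psCap w B) g ∧
    (∀ b ∉ H, g (PSV.player b) PSV.snk = r b) ∧
    ∀ b ∈ H, ∀ b' ∈ H, g (PSV.player b) PSV.snk = g (PSV.player b') PSV.snk

/-- Value of a flow in the profit sharing graph equals the total payment to the players. -/
lemma psFlow_value {E N : Type} [Fintype E] [Fintype N] [DecidableEq E] [DecidableEq N]
    (w : E → ℝ) (B : E → Finset N) (g : PSV E N → PSV E N → ℝ)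
    (hg : IsFlow PSV.src PSV.snk (psCap w B) g) :
    flowValue PSV.src g = ∑ b : N, g (PSV.player b) PSV.snk := by
  classical
  obtain ⟨hnn, hcap, hcons⟩ := hg
  have hzero : ∀ v w', psCap w B v w' = 0 → g v w' = 0 := fun v w' h =>
    le_antisymm (h ▸ hcap v w') (hnn v w')
  have hsnkout : ∀ v, g PSV.snk v = 0 := by
    intro v; apply hzero; cases v <;> rfl
  have hinsnk : ∀ v : PSV E N, (∀ b : N, v ≠ PSV.player b) → g v PSV.snk = 0 := by
    intro v hv; apply hzero
    cases v <;> first | rfl | exact absurd rfl (hv _)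
  have hsum : ∑ v : PSV E N, g v PSV.snk = ∑ b : N, g (PSV.player b) PSV.snk := by
    have hinj : ∀ x ∈ (Finset.univ : Finset N), ∀ y ∈ (Finset.univ : Finset N),
        PSV.player (E := E) x = PSV.player y → x = y := by
      intro x _ y _ h; injection h
    rw [← Finset.sum_image (g := PSV.player) (f := fun v => g v PSV.snk) hinj]
    symm
    apply Finset.sum_subset (Finset.subset_univ _)
    intro v _ hv
    exact hinsnk v (fun b hb => hv (hb ▸ Finset.mem_image_of_mem _ (Finset.mem_univ b)))
  have htot : ∑ v : PSV E N, ((∑ x, g v x) - ∑ x, g x v) = 0 := by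
    rw [Finset.sum_sub_distrib, Finset.sum_comm, sub_self]
  have hne : (PSV.src : PSV E N) ≠ PSV.snk := fun h => by cases h
  have hpair : ((∑ x, g PSV.src x) - ∑ x, g x PSV.src)
      + ((∑ x, g PSV.snk x) - ∑ x, g x PSV.snk) = 0 := by
    have hs := Finset.sum_subset (Finset.subset_univ
      ({PSV.src, PSV.snk} : Finset (PSV E N))) (fun v _ hv => by
        simp only [Finset.mem_insert, Finset.mem_singleton] at hv
        push_neg at hv
        exact sub_eq_zero_of_eq (hcons v hv.1 hv.2).symm)
    rw [Finset.sum_pair hne] at hs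
    rw [hs, htot]
  have hout0 : (∑ x, g PSV.snk x) = 0 := Finset.sum_eq_zero (fun x _ => hsnkout x)
  have : flowValue PSV.src g = (∑ x, g x PSV.snk) - ∑ x, g PSV.snk x := by
    unfold flowValue; linarith [hpair]
  rw [this, hout0, sub_zero, hsum]

/-- Key claim of the iteration lemma: any two flows that are maximum among the flows in the
iteration class pay every player the same amount; in particular every edge `(b, snk)` with
`b ∈ H` is fixed. -/
theorem iteration_fixes_edges {E N : Type} [Fintype E] [Fintype N]
    [DecidableEq E] [DecidableEq N]
    (w : E → ℝ) (hw : ∀ e, 0 ≤ w e) (B : E → Finset N) (hB : ∀ e, B e ≠ ∅)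
    (H : Finset N) (hH : H.Nonempty) (r : N → ℝ)
    (f f' : PSV E N → PSV E N → ℝ)
    (hf : InIterClass w B H r f)
    (hfmax : ∀ g, InIterClass w B H r g → flowValue PSV.src g ≤ flowValue PSV.src f)
    (hf' : InIterClass w B H r f')
    (hf'max : ∀ g, InIterClass w B H r g → flowValue PSV.src g ≤ flowValue PSV.src f') :
    ∀ b : N, f (PSV.player b) PSV.snk = f' (PSV.player b) PSV.snk := by
  classical
  obtain ⟨b0, hb0⟩ := hH
  have hval : flowValue PSV.src f = flowValue PSV.src f' :=
    le_antisymm (hf'max f hf) (hfmax f' hf')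
  have hform : ∀ g, InIterClass w B H r g →
      flowValue PSV.src g = (∑ b ∈ Hᶜ, r b) + (H.card : ℝ) * g (PSV.player b0) PSV.snk := by
    intro g ⟨hgf, hgr, hgc⟩
    rw [psFlow_value w B g hgf, ← Finset.sum_add_sum_compl H, add_comm]
    congr 1
    · apply Finset.sum_congr rfl
      intro b hb
      exact hgr b (Finset.mem_compl.mp hb)
    · rw [Finset.sum_congr rfl (fun b hb => hgc b hb b0 hb0), Finset.sum_const,
        nsmul_eq_mul]
  have hcard : (H.card : ℝ) ≠ 0 := by
    simp [Finset.card_ne_zero_of_mem hb0]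
  have hb0eq : f (PSV.player b0) PSV.snk = f' (PSV.player b0) PSV.snk := by
    have h1 := hform f hf
    have h2 := hform f' hf'
    rw [h1, h2] at hval
    have := add_left_cancel hval
    exact mul_left_cancel₀ hcard this
  intro b
  by_cases hb : b ∈ H
  · rw [hf.2.2 b hb b0 hb0, hf'.2.2 b hb b0 hb0, hb0eq]
  · rw [hf.2.1 b hb, hf'.2.1 b hb]
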